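/- Let M ∈ {0,1}^{s×n} be a binary matrix in which all rows are pairwise distinct, and let y ∈ ℝ^{1×s} have all coordinates nonzero. Suppose yM has exactly one nonzero entry. Then the bipartite graph H with vertex classes {rows} ∪ {columns} and an edge between row σ and column ν iff M_{σ,ν} = 1, where every row of M has at least 2 ones, contains a cycle. -/

import Mathlib

/-- The bipartite graph on rows ⊕ columns with an edge between row `σ` and
column `ν` iff `M σ ν = 1`. -/
def bipGraph {s n : ℕ} (M : Matrix (Fin s) (Fin n) ℝ) : SimpleGraph (Fin s ⊕ Fin n) where
  Adj a b :=
    (∃ σ ν, a = Sum.inl σ ∧ b = Sum.inr ν ∧ M σ ν = 1) ∨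
    (∃ σ ν, a = Sum.inr ν ∧ b = Sum.inl σ ∧ M σ ν = 1)
  symm := by
    constructor
    rintro a b (⟨σ, ν, rfl, rfl, h⟩ | ⟨σ, ν, rfl, rfl, h⟩)
    · exact Or.inr ⟨σ, ν, rfl, rfl, h⟩
    · exact Or.inl ⟨σ, ν, rfl, rfl, h⟩
  loopless := by
    constructor
    rintro a (⟨σ, ν, rfl, h, -⟩ | ⟨σ, ν, rfl, h, -⟩) <;> simp at h

open SimpleGraph in
/-- In an acyclic graph, the starting vertex of a path of maximal length has a
unique neighbour, namely the second vertex of the path. -/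
lemma unique_nbr_of_max {V : Type*} [DecidableEq V] {G : SimpleGraph V}
    (hG : G.IsAcyclic) {v x u : V} (h : G.Adj v x) (q : G.Walk x u)
    (hp : (Walk.cons h q).IsPath)
    (hmax : ∀ (a b : V) (r : G.Walk a b), r.IsPath → r.length ≤ (Walk.cons h q).length) :
    ∀ w, G.Adj v w → w = x := by
  intro w hw
  by_contra hne
  have hq : q.IsPath := ((Walk.cons_isPath_iff h q).mp hp).1
  have hvq : v ∉ q.support := ((Walk.cons_isPath_iff h q).mp hp).2
  -- `w` must be in the support of the path, else we could extend the path.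
  have hws : w ∈ q.support := by
    by_cases hmem : w ∈ (Walk.cons h q).support
    · rw [Walk.support_cons] at hmem
      rcases List.mem_cons.mp hmem with hc | hc
      · exact absurd hc hw.ne'
      · exact hc
    · have hlong : (Walk.cons hw.symm (Walk.cons h q)).IsPath :=
        (Walk.cons_isPath_iff _ _).mpr ⟨hp, hmem⟩
      have := hmax _ _ _ hlong
      simp [Walk.length_cons] at this
  -- build a cycle
  set t := q.takeUntil w hws with ht_def
  have ht : t.IsPath := hq.takeUntil hws
  have hvt : v ∉ t.support := fun hh => hvq (Walk.support_takeUntil_subset q hws hh)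
  have hct : (Walk.cons h t).IsPath := (Walk.cons_isPath_iff h t).mpr ⟨ht, hvt⟩
  have hr : ((Walk.cons h t).reverse).IsPath := hct.reverse
  have hcyc : (Walk.cons hw (Walk.cons h t).reverse).IsCycle := by
    rw [Walk.cons_isCycle_iff]
    refine ⟨hr, ?_⟩
    intro hmem
    rw [Walk.edges_reverse, List.mem_reverse, Walk.edges_cons, List.mem_cons] at hmem
    rcases hmem with hc | hc
    · rw [Sym2.eq_iff] at hc
      rcases hc with ⟨-, hc⟩ | ⟨hc, -⟩
      · exact hne hc
      · exact h.ne hc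
    · exact hvt (Walk.fst_mem_support_of_mem_edges t hc)
  exact hG _ hcyc

theorem stmt_7 (s n : ℕ) (M : Matrix (Fin s) (Fin n) ℝ)
    (hbin : ∀ σ ν, M σ ν = 0 ∨ M σ ν = 1)
    (hdist : ∀ σ σ' : Fin s, σ ≠ σ' → M σ ≠ M σ')
    (htwo : ∀ σ : Fin s, 2 ≤ (Finset.univ.filter fun ν => M σ ν = 1).card)
    (y : Fin s → ℝ) (hy : ∀ σ, y σ ≠ 0)
    (i : Fin n) (hnz : Matrix.vecMul y M i ≠ 0)
    (hz : ∀ j : Fin n, j ≠ i → Matrix.vecMul y M j = 0) :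
    ¬ (bipGraph M).IsAcyclic := by
  classical
  intro hac
  -- adjacency characterizations
  have hadj : ∀ σ ν, (bipGraph M).Adj (Sum.inl σ) (Sum.inr ν) ↔ M σ ν = 1 := by
    intro σ ν
    constructor
    · rintro (⟨σ', ν', h1, h2, h3⟩ | ⟨σ', ν', h1, h2, h3⟩)
      · injection h1 with h1; injection h2 with h2; subst h1; subst h2; exact h3
      · exact absurd h1 (by simp)
    · intro h
      exact Or.inl ⟨σ, ν, rfl, rfl, h⟩
  have hadjr : ∀ (j : Fin n) (w : Fin s ⊕ Fin n), (bipGraph M).Adj (Sum.inr j) w →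
      ∃ σ, w = Sum.inl σ ∧ M σ j = 1 := by
    rintro j w (⟨σ', ν', h1, h2, h3⟩ | ⟨σ', ν', h1, h2, h3⟩)
    · exact absurd h1 (by simp)
    · injection h1 with h1; subst h1; exact ⟨σ', h2, h3⟩
  -- the key column fact: a column with exactly one `1` must be column `i`
  have hcol : ∀ (j : Fin n) (σj : Fin s), M σj j = 1 → (∀ σ, M σ j = 1 → σ = σj) → j = i := by
    intro j σj h1 huniq
    by_contra hji
    have hzj := hz j hji
    have hsum : Matrix.vecMul y M j = y σj := by
      rw [show Matrix.vecMul y M j = ∑ σ, y σ * M σ j from by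
        simp [Matrix.vecMul, dotProduct]]
      rw [Finset.sum_eq_single σj]
      · rw [h1, mul_one]
      · intro b _ hb
        rcases hbin b j with h0 | h0
        · rw [h0, mul_zero]
        · exact absurd (huniq b h0) hb
      · intro hb; exact absurd (Finset.mem_univ σj) hb
    exact hy σj (by rw [← hsum]; exact hzj)
  -- s is positive
  have hsne : Nonempty (Fin s) := by
    rcases Nat.eq_zero_or_pos s with hs | hs
    · subst hs
      exfalso
      apply hnz
      simp [Matrix.vecMul, dotProduct]
    · exact ⟨⟨0, hs⟩⟩
  obtain ⟨σ0⟩ := hsne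
  -- a path of length 1 exists
  obtain ⟨ν1, hν1, ν2, hν2, hνne⟩ :=
    Finset.one_lt_card.mp (lt_of_lt_of_le one_lt_two (htwo σ0))
  have hM1 : M σ0 ν1 = 1 := (Finset.mem_filter.mp hν1).2
  have hp0 : (SimpleGraph.Walk.cons ((hadj σ0 ν1).mpr hM1) SimpleGraph.Walk.nil).IsPath :=
    (SimpleGraph.Walk.cons_isPath_iff _ _).mpr ⟨SimpleGraph.Walk.IsPath.nil, by simp⟩
  -- take a path of maximal length
  set N := Fintype.card (Fin s ⊕ Fin n) with hN
  set P : ℕ → Prop := fun L => ∃ (a b : Fin s ⊕ Fin n) (r : (bipGraph M).Walk a b),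
    r.IsPath ∧ r.length = L with hP
  have hP1 : P 1 := ⟨_, _, _, hp0, by simp⟩
  have hbd : ∀ L, P L → L ≤ N := by
    rintro L ⟨a, b, r, hr, rfl⟩
    exact hr.length_lt.le
  have h1N : 1 ≤ N := hbd 1 hP1
  have hPL : P (Nat.findGreatest P N) := Nat.findGreatest_spec h1N hP1
  have hL1 : 1 ≤ Nat.findGreatest P N := Nat.le_findGreatest h1N hP1
  obtain ⟨a, b, p, hp, hplen⟩ := hPL
  have hmax : ∀ (c d : Fin s ⊕ Fin n) (r : (bipGraph M).Walk c d), r.IsPath →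
      r.length ≤ p.length := by
    intro c d r hr
    rw [hplen]
    by_contra hlt
    push_neg at hlt
    exact Nat.findGreatest_is_greatest hlt (hbd _ ⟨_, _, r, hr, rfl⟩) ⟨_, _, r, hr, rfl⟩
  have hab : a ≠ b := by
    rintro rfl
    have := (SimpleGraph.Walk.isPath_iff_eq_nil).mp hp
    subst this
    simp at hplen
    omega
  obtain ⟨xa, hax, qa, hpe⟩ := SimpleGraph.Walk.exists_eq_cons_of_ne hab p
  obtain ⟨xb, hbx, qb, hpe'⟩ := SimpleGraph.Walk.exists_eq_cons_of_ne hab.symm p.reverse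
  have ua : ∀ w, (bipGraph M).Adj a w → w = xa := by
    apply unique_nbr_of_max hac hax qa
    · rw [← hpe]; exact hp
    · intro c d r hr; rw [← hpe]; exact hmax c d r hr
  have ub : ∀ w, (bipGraph M).Adj b w → w = xb := by
    apply unique_nbr_of_max hac hbx qb
    · rw [← hpe']; exact hp.reverse
    · intro c d r hr
      rw [← hpe', SimpleGraph.Walk.length_reverse]
      exact hmax c d r hr
  -- any vertex with a unique neighbour must be the column `i`
  have key : ∀ (c xc : Fin s ⊕ Fin n), (bipGraph M).Adj c xc →
      (∀ w, (bipGraph M).Adj c w → w = xc) → c = Sum.inr i := by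
    intro c xc hcx huniq
    match c with
    | Sum.inl σ =>
        exfalso
        obtain ⟨μ1, hμ1, μ2, hμ2, hμne⟩ :=
          Finset.one_lt_card.mp (lt_of_lt_of_le one_lt_two (htwo σ))
        have e1 := huniq _ ((hadj σ μ1).mpr (Finset.mem_filter.mp hμ1).2)
        have e2 := huniq _ ((hadj σ μ2).mpr (Finset.mem_filter.mp hμ2).2)
        rw [← e2] at e1
        injection e1 with e1
        exact hμne e1
    | Sum.inr j =>
        obtain ⟨σj, rfl, hMj⟩ := hadjr j xc hcx
        have huniqσ : ∀ σ, M σ j = 1 → σ = σj := by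
          intro σ hσ
          have := huniq _ (((hadj σ j).mpr hσ).symm)
          injection this
        rw [hcol j σj hMj huniqσ]
  have ha' := key a xa hax ua
  have hb' := key b xb hbx ub
  rw [← hb'] at ha'
  exact hab ha'
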